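/- Let L, T, υ, φ, λ > 0 be reals and N a positive natural number. Let e : ℝ → ℝ^n be continuous on [0,T] and satisfy, for all t ∈ [0,T], ‖e(t)‖₂ ≤ ∫₀^t ( υL + (4φλ/(Nυ²))·τ·e^{2Lτ} + L‖e(τ)‖₂ ) dτ. Then sup_{t∈[0,T]} ‖e(t)‖₂ ≤ ( υL + (2φλ/(Nυ²L))·(e^{2LT} − 1) ) · T · e^{LT}. -/

import Mathlib

set_option maxHeartbeats 1000000


/-- Deviation bound (abstract form of Lemma 3): if `e : ℝ → ℝ^n` is continuous
on `[0,T]` and satisfies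
`‖e(t)‖ ≤ ∫₀^t (υL + (4φλ/(Nυ²)) τ e^{2Lτ} + L‖e(τ)‖) dτ` on `[0,T]`, then
`sup_{t∈[0,T]} ‖e(t)‖ ≤ (υL + (2φλ/(Nυ²L))(e^{2LT} − 1)) T e^{LT}`. -/
theorem deviation_bound {n : ℕ} (L T υ φ lam : ℝ)
    (hL : 0 < L) (hT : 0 < T) (hυ : 0 < υ) (hφ : 0 < φ) (hlam : 0 < lam)
    (N : ℕ) (hN : 0 < N)
    (e : ℝ → EuclideanSpace ℝ (Fin n))
    (he : ContinuousOn e (Set.Icc 0 T))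
    (hineq : ∀ t ∈ Set.Icc (0 : ℝ) T,
      ‖e t‖ ≤ ∫ τ in (0 : ℝ)..t,
        (υ * L + (4 * φ * lam / ((N : ℝ) * υ ^ 2)) * τ * Real.exp (2 * L * τ) +
          L * ‖e τ‖)) :
    ∀ t ∈ Set.Icc (0 : ℝ) T,
      ‖e t‖ ≤ (υ * L + (2 * φ * lam / ((N : ℝ) * υ ^ 2 * L)) *
        (Real.exp (2 * L * T) - 1)) * T * Real.exp (L * T) := by
  intro t ht
  obtain ⟨ht0, htT⟩ := ht
  have hNpos : (0:ℝ) < (N:ℝ) := by exact_mod_cast hN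
  set C : ℝ := 4 * φ * lam / ((N : ℝ) * υ ^ 2) with hCdef
  have hCpos : 0 < C := by positivity
  -- clamp function
  set c : ℝ → ℝ := fun s => max 0 (min s T) with hcdef
  have hcC : Continuous c := continuous_const.max (continuous_id.min continuous_const)
  have hcmem : ∀ s, c s ∈ Set.Icc (0:ℝ) T :=
    fun s => ⟨le_max_left _ _, max_le hT.le (min_le_right _ _)⟩
  have hceq : ∀ s ∈ Set.Icc (0:ℝ) T, c s = s := by
    intro s hs
    simp only [hcdef, min_eq_left hs.2, max_eq_right hs.1]
  set m : ℝ → ℝ := fun s => ‖e (c s)‖ with hmdef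
  have hmc : Continuous m := by
    have h1 : ContinuousOn (fun s => e (c s)) Set.univ :=
      he.comp hcC.continuousOn (fun x _ => hcmem x)
    exact (continuousOn_univ.1 h1).norm
  have hmnn : ∀ s, 0 ≤ m s := fun s => norm_nonneg _
  set b : ℝ → ℝ := fun τ => υ * L + C * τ * Real.exp (2 * L * τ) with hbdef
  have hbc : Continuous b := by
    apply continuous_const.add
    exact (continuous_const.mul continuous_id).mul
      ((continuous_const.mul continuous_id).rexp)
  set f : ℝ → ℝ := fun τ => b τ + L * m τ with hfdef
  have hfc : Continuous f := hbc.add (continuous_const.mul hmc)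
  set g : ℝ → ℝ := fun s => ∫ τ in (0:ℝ)..s, f τ with hgdef
  have hgderiv : ∀ s, HasDerivAt g (f s) s := by
    intro s
    exact intervalIntegral.integral_hasDerivAt_right (hfc.intervalIntegrable _ _)
      (hfc.stronglyMeasurableAtFilter _ _) hfc.continuousAt
  -- m ≤ g on [0,T]
  have hmg : ∀ s ∈ Set.Icc (0:ℝ) T, m s ≤ g s := by
    intro s hs
    have h1 : m s = ‖e s‖ := by simp only [hmdef, hceq s hs]
    rw [h1]
    refine (hineq s hs).trans_eq ?_
    refine (intervalIntegral.integral_congr ?_)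
    intro τ hτ
    have hτ' : τ ∈ Set.Icc (0:ℝ) T := by
      rw [Set.uIcc_of_le hs.1] at hτ
      exact ⟨hτ.1, hτ.2.trans hs.2⟩
    simp only [hfdef, hbdef, hmdef, hceq τ hτ', hCdef]
  -- integrating factor
  set w : ℝ → ℝ := fun s => Real.exp (-(L * s)) with hwdef
  have hwderiv : ∀ s, HasDerivAt w (w s * (-L)) s := by
    intro s
    have h1 : HasDerivAt (fun s : ℝ => -(L * s)) (-L) s := by
      have := ((hasDerivAt_id s).const_mul L).neg
      simp only [Pi.neg_def, id, mul_one] at this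
      exact this
    simpa [hwdef] using h1.exp
  have hwpos : ∀ s, 0 < w s := fun s => Real.exp_pos _
  set D : ℝ → ℝ := fun s => (∫ τ in (0:ℝ)..s, w τ * b τ) - w s * g s with hDdef
  have hDderiv : ∀ s, HasDerivAt D
      (w s * b s - (w s * (-L) * g s + w s * f s)) s := by
    intro s
    have h1 : HasDerivAt (fun u => ∫ τ in (0:ℝ)..u, w τ * b τ) (w s * b s) s := by
      have hcont : Continuous (fun τ => w τ * b τ) := by
        exact ((continuous_const.mul continuous_id).neg.rexp).mul hbc
      exact intervalIntegral.integral_hasDerivAt_right (hcont.intervalIntegrable _ _)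
        (hcont.stronglyMeasurableAtFilter _ _) hcont.continuousAt
    exact h1.sub ((hwderiv s).mul (hgderiv s))
  have hDmono : MonotoneOn D (Set.Icc 0 T) := by
    apply monotoneOn_of_deriv_nonneg (convex_Icc 0 T)
    · exact fun s _ => ((hDderiv s).continuousAt.continuousWithinAt)
    · intro s hs
      exact ((hDderiv s).differentiableAt.differentiableWithinAt)
    · intro s hs
      rw [interior_Icc] at hs
      rw [(hDderiv s).deriv]
      have hs' : s ∈ Set.Icc (0:ℝ) T := ⟨hs.1.le, hs.2.le⟩
      have h2 : m s ≤ g s := hmg s hs'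
      have : w s * b s - (w s * (-L) * g s + w s * f s)
          = w s * L * (g s - m s) := by
        simp only [hfdef]; ring
      rw [this]
      exact mul_nonneg (mul_nonneg (hwpos s).le hL.le) (by linarith)
  have hD0 : D 0 = 0 := by
    simp [hDdef, hgdef]
  have hDt : 0 ≤ D t := by
    rw [← hD0]
    exact hDmono ⟨le_refl 0, hT.le⟩ ⟨ht0, htT⟩ ht0
  -- hence g t ≤ exp(L t) * ∫₀^t w b
  have hgt : g t ≤ Real.exp (L * t) * ∫ τ in (0:ℝ)..t, w τ * b τ := by
    have h1 : w t * g t ≤ ∫ τ in (0:ℝ)..t, w τ * b τ := by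
      have := hDt; simp only [hDdef] at this; linarith
    have h2 : Real.exp (L * t) * (w t * g t)
        ≤ Real.exp (L * t) * ∫ τ in (0:ℝ)..t, w τ * b τ :=
      mul_le_mul_of_nonneg_left h1 (Real.exp_pos _).le
    have h3 : Real.exp (L * t) * (w t * g t) = g t := by
      rw [hwdef]
      rw [← mul_assoc, ← Real.exp_add]
      simp
    linarith
  -- bound the integral
  have hint1 : (∫ τ in (0:ℝ)..t, w τ * b τ)
      ≤ ∫ τ in (0:ℝ)..t, (υ * L + C * T * Real.exp (2 * L * τ)) := by
    apply intervalIntegral.integral_mono_on ht0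
    · exact (((continuous_const.mul continuous_id).neg.rexp).mul hbc).intervalIntegrable _ _
    · exact (continuous_const.add ((continuous_const.mul
        ((continuous_const.mul continuous_id).rexp)))).intervalIntegrable _ _
    · intro τ hτ
      have hτ0 : 0 ≤ τ := hτ.1
      have hτT : τ ≤ T := hτ.2.trans htT
      have hw1 : w τ ≤ 1 := by
        rw [hwdef]
        apply Real.exp_le_one_iff.2
        have : 0 ≤ L * τ := mul_nonneg hL.le hτ0
        linarith
      have hbnn : 0 ≤ b τ := by
        have : 0 ≤ C * τ * Real.exp (2 * L * τ) := by positivity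
        have : 0 < υ * L := by positivity
        simp only [hbdef]; linarith [mul_nonneg (mul_nonneg hCpos.le hτ0) (Real.exp_pos (2*L*τ)).le]
      calc w τ * b τ ≤ 1 * b τ := mul_le_mul_of_nonneg_right hw1 hbnn
        _ = b τ := one_mul _
        _ ≤ υ * L + C * T * Real.exp (2 * L * τ) := by
            simp only [hbdef]
            have : C * τ * Real.exp (2 * L * τ) ≤ C * T * Real.exp (2 * L * τ) := by
              apply mul_le_mul_of_nonneg_right _ (Real.exp_pos _).le
              exact mul_le_mul_of_nonneg_left hτT hCpos.le
            linarith
  -- compute the explicit integral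
  have hexp : (∫ τ in (0:ℝ)..t, Real.exp (2 * L * τ))
      = (Real.exp (2 * L * t) - 1) / (2 * L) := by
    have hderiv : ∀ τ ∈ Set.uIcc (0:ℝ) t,
        HasDerivAt (fun τ => Real.exp (2 * L * τ) / (2 * L)) (Real.exp (2 * L * τ)) τ := by
      intro τ _
      have h1 : HasDerivAt (fun τ : ℝ => 2 * L * τ) (2 * L) τ := by
        simpa using (hasDerivAt_id τ).const_mul (2 * L)
      have h2 := (h1.exp).div_const (2 * L)
      have hL2 : (2:ℝ) * L ≠ 0 := by positivity
      simpa [mul_div_assoc, mul_div_cancel_right₀, hL2] using h2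
    have := intervalIntegral.integral_eq_sub_of_hasDerivAt hderiv
      ((Real.continuous_exp.comp (continuous_const.mul continuous_id)).intervalIntegrable _ _)
    rw [this]
    simp [sub_div]
  have hint2 : (∫ τ in (0:ℝ)..t, (υ * L + C * T * Real.exp (2 * L * τ)))
      = υ * L * t + C * T * ((Real.exp (2 * L * t) - 1) / (2 * L)) := by
    have hcont2 : Continuous (fun τ : ℝ => C * T * Real.exp (2 * L * τ)) := by continuity
    rw [intervalIntegral.integral_add (intervalIntegrable_const)
      (hcont2.intervalIntegrable _ _),
      intervalIntegral.integral_const, intervalIntegral.integral_const_mul, hexp]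
    simp [smul_eq_mul]
    ring
  -- assemble
  set A : ℝ := υ * L + (2 * φ * lam / ((N : ℝ) * υ ^ 2 * L)) * (Real.exp (2 * L * T) - 1)
    with hAdef
  have hexpTge : (1:ℝ) ≤ Real.exp (2 * L * T) := by
    apply Real.one_le_exp; positivity
  have hApos : 0 < A := by
    have h1 : 0 ≤ (2 * φ * lam / ((N : ℝ) * υ ^ 2 * L)) * (Real.exp (2 * L * T) - 1) := by
      apply mul_nonneg (by positivity); linarith
    have : 0 < υ * L := by positivity
    simp only [hAdef]; linarith
  have hACT : A * T = υ * L * T + C * T * ((Real.exp (2 * L * T) - 1) / (2 * L)) := by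
    simp only [hAdef, hCdef]
    have h1 : (N:ℝ) ≠ 0 := hNpos.ne'
    have h2 : υ ≠ 0 := hυ.ne'
    have h3 : L ≠ 0 := hL.ne'
    field_simp
    ring
  have hintA : υ * L * t + C * T * ((Real.exp (2 * L * t) - 1) / (2 * L)) ≤ A * T := by
    rw [hACT]
    have hexpmono : Real.exp (2 * L * t) ≤ Real.exp (2 * L * T) :=
      Real.exp_le_exp.2 (by nlinarith)
    have h1 : υ * L * t ≤ υ * L * T := by
      have := mul_le_mul_of_nonneg_left htT (by positivity : (0:ℝ) ≤ υ * L)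
      linarith
    have h2 : C * T * ((Real.exp (2 * L * t) - 1) / (2 * L))
        ≤ C * T * ((Real.exp (2 * L * T) - 1) / (2 * L)) := by
      apply mul_le_mul_of_nonneg_left _ (by positivity)
      apply (div_le_div_iff_of_pos_right (by positivity : (0:ℝ) < 2 * L)).2
      linarith
    linarith
  -- final chain
  have hmt : ‖e t‖ = m t := by simp only [hmdef, hceq t ⟨ht0, htT⟩]
  have step1 : ‖e t‖ ≤ g t := hmt ▸ hmg t ⟨ht0, htT⟩
  have step2 : g t ≤ Real.exp (L * t) * (A * T) := by
    refine hgt.trans ?_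
    have h4 : (∫ τ in (0:ℝ)..t, w τ * b τ) ≤ A * T := by
      refine hint1.trans ?_
      rw [hint2]; exact hintA
    exact mul_le_mul_of_nonneg_left h4 (Real.exp_pos _).le
  have step3 : Real.exp (L * t) * (A * T) ≤ Real.exp (L * T) * (A * T) := by
    apply mul_le_mul_of_nonneg_right _ (by positivity)
    exact Real.exp_le_exp.2 (by nlinarith)
  calc ‖e t‖ ≤ Real.exp (L * T) * (A * T) := le_trans step1 (le_trans step2 step3)
    _ = A * T * Real.exp (L * T) := by ring
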